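/- Let F be a field of characteristic p > 0 and let δ = h(χ)∂ be the derivation f ↦ f′·h(z) on B[z], where χ is multiplication by z and ∂ the usual derivative, B a unital F-algebra, h ∈ Z(B)[x] with non-zero-divisor leading coefficient. Then the set {χ^i h(χ)^j ∂^j : i ≥ 0, 0 ≤ j < p} is a basis of the algebra D_h(B[z]) (generated by multiplications by elements of B, χ, and δ) as a left B-module. -/

import Mathlib

noncomputable section

/-- b is not a (two-sided) zero divisor of B. -/
def NotZD {B : Type*} [Ring B] (b : B) : Prop :=
  ∀ c : B, (c * b = 0 → c = 0) ∧ (b * c = 0 → c = 0)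

variable (F : Type*) [Field F] (B : Type*) [Ring B] [Algebra F B]

/-- The formal derivative ∂ on B[z], as an F-linear endomorphism. -/
def dOp : Module.End F (Polynomial B) :=
  (Polynomial.derivative (R := B)).restrictScalars F

/-- Multiplication by z on B[z]. -/
def chi : Module.End F (Polynomial B) := LinearMap.mulLeft F (Polynomial.X : Polynomial B)

/-- The operator h(χ), multiplication by h(z), i.e. h evaluated at χ with
coefficients acting as left multiplications. -/
def hChi (h : Polynomial B) : Module.End F (Polynomial B) :=
  h.sum fun n b => LinearMap.mulLeft F (Polynomial.C b) * (chi F B) ^ n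

/-- The derivation δ(f) = f′·h(z). -/
def deltaOp (h : Polynomial B) : Module.End F (Polynomial B) :=
  LinearMap.mulRight F (h : Polynomial B) * dOp F B

/-- The algebra D_h(B[z]) of differential operators generated by left
multiplications by elements of B, multiplication by z, and δ. -/
def Dh (h : Polynomial B) : Subalgebra F (Module.End F (Polynomial B)) :=
  Algebra.adjoin F
    ((Set.range fun b : B => LinearMap.mulLeft F (Polynomial.C b)) ∪
      {chi F B, deltaOp F B h})

namespace Aux
open Polynomial
variable {B}

def ml (g : Polynomial B) : Module.End F (Polynomial B) := LinearMap.mulLeft F g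

variable {F}

@[simp] lemma ml_apply (g f : Polynomial B) : ml F g f = g * f := rfl

lemma ml_mul (g g' : Polynomial B) : ml F (g * g') = ml F g * ml F g' := by
  ext f; simp [ml, mul_assoc]

lemma ml_add (g g' : Polynomial B) : ml F (g + g') = ml F g + ml F g' := by
  ext f; simp [ml, add_mul]

@[simp] lemma ml_zero : ml F (0 : Polynomial B) = 0 := by ext f; simp [ml]

@[simp] lemma ml_one : ml F (1 : Polynomial B) = 1 := by ext f; simp [ml]

lemma ml_pow (g : Polynomial B) (n : ℕ) : ml F (g ^ n) = ml F g ^ n := by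
  induction n with
  | zero => simp
  | succ n ih => rw [pow_succ, pow_succ, ml_mul, ih]

lemma central_C_comm {a : B} (ha : a ∈ Set.center B) (g : Polynomial B) :
    C a * g = g * C a := by
  ext n; rw [coeff_C_mul, coeff_mul_C, ha.comm]

lemma central_comm {h : Polynomial B} (hcen : ∀ n, h.coeff n ∈ Set.center B)
    (g : Polynomial B) : h * g = g * h := by
  have hs := sum_C_mul_X_pow_eq h
  rw [Polynomial.sum_def] at hs
  rw [← hs, Finset.sum_mul, Finset.mul_sum]
  refine Finset.sum_congr rfl fun n _ => ?_
  rw [mul_assoc, X_pow_mul, ← mul_assoc, central_C_comm (hcen n), mul_assoc]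

@[simp] lemma dOp_apply (f : Polynomial B) : dOp F B f = derivative f := rfl

lemma dOp_pow_apply (k : ℕ) (f : Polynomial B) :
    ((dOp F B) ^ k) f = derivative^[k] f := by
  induction k generalizing f with
  | zero => simp
  | succ k ih =>
    rw [pow_succ, Module.End.mul_apply, ih, Function.iterate_succ_apply]
    rfl

lemma chi_eq : chi F B = ml F X := rfl

lemma ml_sum {ι : Type*} (s : Finset ι) (f : ι → Polynomial B) :
    ml F (∑ n ∈ s, f n) = ∑ n ∈ s, ml F (f n) :=
  map_sum (AddMonoidHom.mk' (ml F) ml_add) f s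

lemma hChi_eq (h : Polynomial B) : hChi F B h = ml F h := by
  have hs := sum_C_mul_X_pow_eq h
  rw [Polynomial.sum_def] at hs
  rw [hChi, Polynomial.sum_def]
  conv_rhs => rw [← hs]
  rw [ml_sum]
  refine Finset.sum_congr rfl fun n _ => ?_
  rw [ml_mul, ml_pow, chi_eq]
  rfl


variable {h : Polynomial B} (hcen : ∀ n, h.coeff n ∈ Set.center B)
include hcen

lemma delta_eq : deltaOp F B h = ml F h * dOp F B := by
  refine LinearMap.ext fun f => ?_
  simp only [deltaOp, Module.End.mul_apply, LinearMap.mulRight_apply, ml_apply, dOp_apply]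
  exact (central_comm hcen (derivative f)).symm

omit hcen

lemma d_ml (g : Polynomial B) :
    dOp F B * ml F g = ml F g * dOp F B + ml F (derivative g) := by
  refine LinearMap.ext fun f => ?_
  simp only [Module.End.mul_apply, LinearMap.add_apply, ml_apply, dOp_apply, derivative_mul]
  abel

include hcen

lemma key (w : Polynomial B) (j : ℕ) :
    deltaOp F B h * (ml F w * (dOp F B) ^ j) =
      ml F (w * h) * (dOp F B) ^ (j + 1) + ml F (derivative w * h) * (dOp F B) ^ j := by
  have e : deltaOp F B h * (ml F w * (dOp F B) ^ j)
      = ml F h * (dOp F B * ml F w) * (dOp F B) ^ j := by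
    rw [delta_eq hcen, mul_assoc, mul_assoc, mul_assoc]
  rw [e, d_ml, mul_add, add_mul, ← mul_assoc (ml F h) (ml F w), ← ml_mul,
      central_comm hcen w, ← ml_mul h (derivative w),
      central_comm hcen (derivative w), mul_assoc (ml F (w * h)), ← pow_succ']

lemma hpow_deriv (j : ℕ) : ∃ u : Polynomial B, derivative (h ^ j) * h = u * h ^ j := by
  induction j with
  | zero => exact ⟨0, by simp⟩
  | succ j ih =>
    obtain ⟨u, hu⟩ := ih
    refine ⟨derivative h + u, ?_⟩
    have e1 : derivative (h ^ (j + 1)) = derivative h * h ^ j + h * derivative (h ^ j) := by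
      rw [pow_succ', derivative_mul]
    rw [e1, add_mul, mul_assoc h, hu, ← mul_assoc h u, central_comm hcen u, mul_assoc u,
        mul_assoc (derivative h), ← central_comm hcen (h ^ j), ← pow_succ', add_mul]


omit hcen

lemma iter_deriv_X_pow (k n : ℕ) :
    derivative^[k] (X ^ n : Polynomial B) = (n.descFactorial k : Polynomial B) * X ^ (n - k) := by
  induction k with
  | zero => simp
  | succ k ih =>
    rw [Function.iterate_succ_apply', ih, derivative_natCast_mul, derivative_X_pow,
        Nat.descFactorial_succ, Nat.sub_sub, Nat.cast_mul, C_eq_natCast, ← mul_assoc,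
        (Nat.cast_commute (n.descFactorial k) (((n - k : ℕ) : Polynomial B))).eq, mul_assoc]

lemma dOp_pow_p_zero (p : ℕ) [CharP F p] (hp : 0 < p) : (dOp F B) ^ p = 0 := by
  have hB : ((p : ℕ) : B) = 0 := by
    rw [← map_natCast (algebraMap F B), CharP.cast_eq_zero F p, map_zero]
  have hpB : ((p : ℕ) : Polynomial B) = 0 := by
    rw [← C_eq_natCast, hB, C_0]
  refine LinearMap.ext fun f => ?_
  rw [LinearMap.zero_apply]
  induction f using Polynomial.induction_on' with
  | add f g hf hg => rw [map_add, hf, hg, add_zero]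
  | monomial n a =>
    obtain ⟨m, hm⟩ : (p : ℕ) ∣ n.descFactorial p :=
      dvd_trans (Nat.dvd_factorial hp le_rfl)
        (Nat.factorial_dvd_descFactorial n p)
    rw [dOp_pow_apply, ← C_mul_X_pow_eq_monomial, iterate_derivative_C_mul, iter_deriv_X_pow,
        hm, Nat.cast_mul, hpB, zero_mul, zero_mul, mul_zero]


variable (F h) in
def NN : AddSubmonoid (Module.End F (Polynomial B)) :=
  AddSubmonoid.closure {T | ∃ g j, T = ml F g * (deltaOp F B h) ^ j}

variable (F h) in
def PP : AddSubmonoid (Module.End F (Polynomial B)) :=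
  AddSubmonoid.closure {T | ∃ g j, T = ml F g * ml F (h ^ j) * (dOp F B) ^ j}

lemma N_gen (g : Polynomial B) (j : ℕ) : ml F g * (deltaOp F B h) ^ j ∈ NN F h :=
  AddSubmonoid.subset_closure ⟨g, j, rfl⟩

lemma N_ml_mul {T} (hT : T ∈ NN F h) (f : Polynomial B) : ml F f * T ∈ NN F h := by
  induction hT using AddSubmonoid.closure_induction with
  | mem x hx => obtain ⟨g, j, rfl⟩ := hx; rw [← mul_assoc, ← ml_mul]; exact N_gen _ _
  | zero => rw [mul_zero]; exact zero_mem _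
  | add x y _ _ hx hy => rw [mul_add]; exact add_mem hx hy

lemma N_mul_delta {T} (hT : T ∈ NN F h) : T * deltaOp F B h ∈ NN F h := by
  induction hT using AddSubmonoid.closure_induction with
  | mem x hx =>
    obtain ⟨g, j, rfl⟩ := hx
    rw [mul_assoc, ← pow_succ]; exact N_gen _ _
  | zero => rw [zero_mul]; exact zero_mem _
  | add x y _ _ hx hy => rw [add_mul]; exact add_mem hx hy

lemma N_mul_delta_pow {T} (hT : T ∈ NN F h) (j : ℕ) : T * (deltaOp F B h) ^ j ∈ NN F h := by
  induction j with
  | zero => rw [pow_zero, mul_one]; exact hT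
  | succ j ih => rw [pow_succ, ← mul_assoc]; exact N_mul_delta ih

include hcen in
lemma delta_ml (g : Polynomial B) :
    deltaOp F B h * ml F g = ml F g * deltaOp F B h + ml F (derivative g * h) := by
  have := key (F := F) hcen g 0
  simp only [pow_zero, mul_one, zero_add, pow_one] at this
  rw [this, ml_mul, mul_assoc, ← delta_eq hcen]

include hcen in
lemma delta_pow_ml (j : ℕ) (g : Polynomial B) :
    (deltaOp F B h) ^ j * ml F g ∈ NN F h := by
  induction j generalizing g with
  | zero =>
    rw [pow_zero, one_mul]
    have := N_gen (F := F) (h := h) g 0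
    rwa [pow_zero, mul_one] at this
  | succ j ih =>
    rw [pow_succ, mul_assoc, delta_ml hcen, mul_add]
    refine add_mem ?_ (ih _)
    rw [← mul_assoc]
    exact N_mul_delta (ih g)

include hcen in
lemma N_mul_mem {T T'} (hT : T ∈ NN F h) (hT' : T' ∈ NN F h) : T * T' ∈ NN F h := by
  induction hT' using AddSubmonoid.closure_induction with
  | mem x hx =>
    obtain ⟨g, j, rfl⟩ := hx
    induction hT using AddSubmonoid.closure_induction with
    | mem y hy =>
      obtain ⟨f, m, rfl⟩ := hy
      have : ml F f * (deltaOp F B h) ^ m * (ml F g * (deltaOp F B h) ^ j)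
          = ml F f * (((deltaOp F B h) ^ m * ml F g) * (deltaOp F B h) ^ j) := by
        simp only [mul_assoc]
      rw [this]
      exact N_ml_mul (N_mul_delta_pow (delta_pow_ml hcen m g) j) f
    | zero => rw [zero_mul]; exact zero_mem _
    | add x y _ _ hx hy => rw [add_mul]; exact add_mem hx hy
  | zero => rw [mul_zero]; exact zero_mem _
  | add x y _ _ hx hy => rw [mul_add]; exact add_mem hx hy

lemma alg_ml (r : F) :
    algebraMap F (Module.End F (Polynomial B)) r = ml F (C (algebraMap F B r)) := by
  refine LinearMap.ext fun f => ?_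
  rw [Module.algebraMap_end_apply, ml_apply, ← Polynomial.algebraMap_apply,
    Algebra.smul_def]

include hcen in
lemma Dh_le_N {T} (hT : T ∈ Dh F B h) : T ∈ NN F h := by
  induction hT using Algebra.adjoin_induction with
  | mem x hx =>
    rcases hx with ⟨b, rfl⟩ | hx
    · have := N_gen (F := F) (h := h) (C b) 0
      rwa [pow_zero, mul_one] at this
    · rcases hx with rfl | rfl
      · have := N_gen (F := F) (h := h) X 0
        rwa [pow_zero, mul_one] at this
      · have := N_gen (F := F) (h := h) 1 1
        rwa [pow_one, ml_one, one_mul] at this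
  | algebraMap r =>
    rw [alg_ml]
    have := N_gen (F := F) (h := h) (C (algebraMap F B r)) 0
    rwa [pow_zero, mul_one] at this
  | add x y _ _ hx hy => exact add_mem hx hy
  | mul x y _ _ hx hy => exact N_mul_mem hcen hx hy

lemma P_gen (g : Polynomial B) (j : ℕ) :
    ml F g * ml F (h ^ j) * (dOp F B) ^ j ∈ PP F h :=
  AddSubmonoid.subset_closure ⟨g, j, rfl⟩

lemma P_ml_mul {T} (hT : T ∈ PP F h) (f : Polynomial B) : ml F f * T ∈ PP F h := by
  induction hT using AddSubmonoid.closure_induction with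
  | mem x hx =>
    obtain ⟨g, j, rfl⟩ := hx
    rw [← mul_assoc, ← mul_assoc, ← ml_mul]
    exact P_gen _ _
  | zero => rw [mul_zero]; exact zero_mem _
  | add x y _ _ hx hy => rw [mul_add]; exact add_mem hx hy

include hcen in
lemma P_delta {T} (hT : T ∈ PP F h) : deltaOp F B h * T ∈ PP F h := by
  induction hT using AddSubmonoid.closure_induction with
  | mem x hx =>
    obtain ⟨g, j, rfl⟩ := hx
    obtain ⟨u, hu⟩ := hpow_deriv hcen j
    rw [← ml_mul, key hcen (g * h ^ j) j]
    have e1 : g * h ^ j * h = g * h ^ (j + 1) := by rw [mul_assoc, ← pow_succ]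
    have e2 : derivative (g * h ^ j) * h = (derivative g * h + g * u) * h ^ j := by
      rw [derivative_mul, add_mul, mul_assoc g, hu, mul_assoc (derivative g),
          ← central_comm hcen (h ^ j), ← mul_assoc (derivative g), ← mul_assoc g u,
          ← add_mul]
    rw [e1, e2, ml_mul (g := g), ml_mul (g := derivative g * h + g * u)]
    exact add_mem (P_gen _ _) (P_gen _ _)
  | zero => rw [mul_zero]; exact zero_mem _
  | add x y _ _ hx hy => rw [mul_add]; exact add_mem hx hy

include hcen in
lemma P_delta_pow (j : ℕ) : (deltaOp F B h) ^ j ∈ PP F h := by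
  induction j with
  | zero =>
    rw [pow_zero]
    have := P_gen (F := F) (h := h) 1 0
    simpa using this
  | succ j ih =>
    rw [pow_succ']
    exact P_delta hcen ih

include hcen in
lemma N_le_P {T} (hT : T ∈ NN F h) : T ∈ PP F h := by
  induction hT using AddSubmonoid.closure_induction with
  | mem x hx =>
    obtain ⟨g, j, rfl⟩ := hx
    exact P_ml_mul (P_delta_pow hcen j) g
  | zero => exact zero_mem _
  | add x y _ _ hx hy => exact add_mem hx hy


lemma chi_mem : chi F B ∈ Dh F B h :=
  Algebra.subset_adjoin (Set.mem_union_right _ (Set.mem_insert _ _))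

lemma delta_mem : deltaOp F B h ∈ Dh F B h :=
  Algebra.subset_adjoin (Set.mem_union_right _ (Set.mem_insert_of_mem _ rfl))

lemma ml_C_mem (b : B) : ml F (C b) ∈ Dh F B h :=
  Algebra.subset_adjoin (Set.mem_union_left _ ⟨b, rfl⟩)

lemma ml_mem (g : Polynomial B) : ml F g ∈ Dh F B h := by
  induction g using Polynomial.induction_on with
  | C a => exact ml_C_mem a
  | add f g hf hg => rw [ml_add]; exact add_mem hf hg
  | monomial n a ih =>
    have e : (C a * X ^ (n + 1)) = (C a * X ^ n) * X := by rw [mul_assoc, pow_succ]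
    rw [e, ml_mul]
    exact mul_mem ih (chi_mem (h := h))

include hcen in
lemma T_mem (j : ℕ) : ml F (h ^ j) * (dOp F B) ^ j ∈ Dh F B h := by
  induction j with
  | zero => simpa using one_mem (Dh F B h)
  | succ j ih =>
    obtain ⟨u, hu⟩ := hpow_deriv hcen j
    have k := key (F := F) hcen (h ^ j) j
    have e : ml F (h ^ (j + 1)) * (dOp F B) ^ (j + 1)
        = deltaOp F B h * (ml F (h ^ j) * (dOp F B) ^ j)
          - ml F u * (ml F (h ^ j) * (dOp F B) ^ j) := by
      rw [k, ← pow_succ, hu, ml_mul, mul_assoc, add_sub_cancel_right]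
    rw [e]
    exact sub_mem (mul_mem (delta_mem (h := h)) ih) (mul_mem (ml_mem u) ih)


lemma term_apply (b : B) (i m j : ℕ) :
    (ml F (C b) * ((chi F B) ^ i * (hChi F B h) ^ m * (dOp F B) ^ m)) (X ^ j : Polynomial B)
      = (j.descFactorial m) • (C b * (X ^ i * (h ^ m * X ^ (j - m)))) := by
  rw [hChi_eq, ← ml_pow, chi_eq, ← ml_pow]
  rw [Module.End.mul_apply, mul_assoc, Module.End.mul_apply, Module.End.mul_apply,
      dOp_pow_apply, iter_deriv_X_pow, ← nsmul_eq_mul]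
  simp only [map_nsmul, ml_apply]

lemma P_repr (p : ℕ) (hp : 0 < p) [CharP F p] {T} (hT : T ∈ PP F h) :
    ∃ c : ℕ × ℕ →₀ B, (∀ q ∈ c.support, q.2 < p) ∧
      T = c.sum fun q b =>
        ml F (C b) * ((chi F B) ^ q.1 * (hChi F B h) ^ q.2 * (dOp F B) ^ q.2) := by
  induction hT using AddSubmonoid.closure_induction with
  | mem x hx =>
    obtain ⟨g, j, rfl⟩ := hx
    by_cases hj : j < p
    · refine ⟨Finsupp.embDomain ⟨fun n => (n, j), fun a b hab => congrArg Prod.fst hab⟩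
        g.toFinsupp.coeff, ?_, ?_⟩
      · intro q hq
        rw [Finsupp.support_embDomain, Finset.mem_map] at hq
        obtain ⟨n, _, rfl⟩ := hq
        exact hj
      · rw [Finsupp.sum_embDomain]
        change _ = (g.toFinsupp.coeff.sum fun n b =>
            ml F (C b) * ((chi F B) ^ n * (hChi F B h) ^ j * (dOp F B) ^ j))
        have e : ∀ (n : ℕ) (b : B),
            ml F (C b) * ((chi F B) ^ n * (hChi F B h) ^ j * (dOp F B) ^ j)
              = ml F (C b * X ^ n) * (ml F (h ^ j) * (dOp F B) ^ j) := by
          intro n b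
          rw [hChi_eq, ← ml_pow, chi_eq, ← ml_pow, ml_mul]
          simp only [mul_assoc]
        have e2 : (g.toFinsupp.coeff.sum fun n b =>
            ml F (C b) * ((chi F B) ^ n * (hChi F B h) ^ j * (dOp F B) ^ j))
              = ∑ n ∈ g.support, ml F (C (g.coeff n) * X ^ n) * (ml F (h ^ j) * (dOp F B) ^ j) := by
          refine Finset.sum_congr rfl fun n _ => e n _
        rw [e2, ← Finset.sum_mul, ← ml_sum]
        have e3 : (∑ n ∈ g.support, C (g.coeff n) * X ^ n) = g := by
          have := sum_C_mul_X_pow_eq g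
          rwa [Polynomial.sum_def] at this
        rw [e3, mul_assoc]
    · refine ⟨0, by simp, ?_⟩
      have hd : (dOp F B) ^ j = 0 := by
        have h0 := dOp_pow_p_zero (F := F) (B := B) p hp
        have : (dOp F B) ^ j = (dOp F B) ^ p * (dOp F B) ^ (j - p) := by
          rw [← pow_add, Nat.add_sub_cancel' (le_of_not_gt hj)]
        rw [this, h0, zero_mul]
      rw [Finsupp.sum_zero_index, hd, mul_zero]
  | zero => exact ⟨0, by simp, by rw [Finsupp.sum_zero_index]⟩
  | add x y hx hy ihx ihy =>
    obtain ⟨c₁, hs₁, rfl⟩ := ihx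
    obtain ⟨c₂, hs₂, rfl⟩ := ihy
    refine ⟨c₁ + c₂, ?_, ?_⟩
    · intro q hq
      rcases Finset.mem_union.mp (Finsupp.support_add hq) with hq' | hq'
      · exact hs₁ q hq'
      · exact hs₂ q hq'
    · rw [Finsupp.sum_add_index' (fun q => by simp) (fun q b₁ b₂ => by
        rw [C_add, ml_add, add_mul])]


lemma indep (p : ℕ) (hp : 0 < p) [CharP F p] (hlead : NotZD h.leadingCoeff)
    (c : ℕ × ℕ →₀ B) (hs : ∀ q ∈ c.support, q.2 < p)
    (h0 : (c.sum fun q b =>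
      ml F (C b) * ((chi F B) ^ q.1 * (hChi F B h) ^ q.2 * (dOp F B) ^ q.2)) = 0) :
    c = 0 := by
  classical
  haveI : NeZero p := ⟨hp.ne'⟩
  have hprime : p.Prime := (CharP.char_is_prime_of_pos F p).out
  have hcancel : ∀ g : Polynomial B, g * h = 0 → g = 0 := by
    intro g hg
    by_cases hh : h = 0
    · have hB : ∀ b : B, b = 0 := fun b => (hlead b).1 (by rw [hh, leadingCoeff_zero, mul_zero])
      exact Polynomial.ext fun n => by rw [hB (g.coeff n), coeff_zero]
    · by_contra hgne
      have hco := coeff_mul_degree_add_degree g h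
      rw [hg, coeff_zero] at hco
      exact hgne (leadingCoeff_eq_zero.mp ((hlead g.leadingCoeff).1 hco.symm))
  have hcancelpow : ∀ (j : ℕ) (g : Polynomial B), g * h ^ j = 0 → g = 0 := by
    intro j
    induction j with
    | zero => intro g hg; simpa using hg
    | succ j ih =>
      intro g hg
      rw [pow_succ, ← mul_assoc] at hg
      exact ih _ (hcancel _ hg)
  have main : ∀ j, j < p → ∀ i : ℕ, c (i, j) = 0 := by
    intro j
    induction j using Nat.strong_induction_on with
    | _ j IH =>
      intro hj i
      have happ : (∑ q ∈ c.support,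
          (ml F (C (c q)) * ((chi F B) ^ q.1 * (hChi F B h) ^ q.2 * (dOp F B) ^ q.2)))
            (X ^ j : Polynomial B) = 0 := by
        have : (c.sum fun q b =>
            ml F (C b) * ((chi F B) ^ q.1 * (hChi F B h) ^ q.2 * (dOp F B) ^ q.2))
              = ∑ q ∈ c.support,
                (ml F (C (c q)) * ((chi F B) ^ q.1 * (hChi F B h) ^ q.2 * (dOp F B) ^ q.2)) := rfl
        rw [← this, h0]
        rfl
      rw [LinearMap.sum_apply] at happ
      simp only [term_apply] at happ
      set f : ℕ × ℕ → Polynomial B := fun q =>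
        (j.descFactorial q.2) • (C (c q) * (X ^ q.1 * (h ^ q.2 * X ^ (j - q.2)))) with hf
      have hcond : ∀ q ∈ c.support, f q ≠ 0 → q.2 = j := by
        intro q hq hne
        rcases lt_trichotomy q.2 j with hlt | heq | hgt
        · exfalso
          apply Finsupp.mem_support_iff.mp hq
          have := IH q.2 hlt (hlt.trans hj) q.1
          rwa [Prod.mk.eta] at this
        · exact heq
        · exfalso
          apply hne
          rw [hf]
          simp only [Nat.descFactorial_eq_zero_iff_lt.mpr hgt, zero_smul]
      have hS : ∑ q ∈ c.support.filter (fun q : ℕ × ℕ => q.2 = j), f q = 0 := by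
        rw [Finset.sum_filter_of_ne hcond]
        exact happ
      have hS2 : (Nat.factorial j) •
          ((∑ q ∈ c.support.filter (fun q : ℕ × ℕ => q.2 = j), C (c q) * X ^ q.1) * h ^ j) = 0 := by
        rw [Finset.sum_mul, Finset.smul_sum, ← hS]
        refine Finset.sum_congr rfl fun q hq => ?_
        have hq2 : q.2 = j := (Finset.mem_filter.mp hq).2
        rw [hf]
        simp only [hq2, Nat.descFactorial_self, Nat.sub_self, pow_zero, mul_one, mul_assoc]
      rw [← Nat.cast_smul_eq_nsmul F] at hS2
      have hfact : ((Nat.factorial j : F)) ≠ 0 := by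
        rw [Ne, CharP.cast_eq_zero_iff F p]
        intro hd
        exact absurd ((Nat.Prime.dvd_factorial hprime).mp hd) (not_le.mpr hj)
      have hG : (∑ q ∈ c.support.filter (fun q : ℕ × ℕ => q.2 = j), C (c q) * X ^ q.1) * h ^ j = 0 := by
        have := congrArg (fun x => (Nat.factorial j : F)⁻¹ • x) hS2
        simpa [smul_smul, inv_mul_cancel₀ hfact] using this
      have hGzero := hcancelpow j _ hG
      have hco : (∑ q ∈ c.support.filter (fun q : ℕ × ℕ => q.2 = j), C (c q) * X ^ q.1).coeff i
          = c (i, j) := by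
        rw [finset_sum_coeff]
        simp only [coeff_C_mul, coeff_X_pow, mul_ite, mul_one, mul_zero]
        rw [Finset.sum_eq_single (i, j)]
        · simp
        · intro q hq hne
          have hq2 : q.2 = j := (Finset.mem_filter.mp hq).2
          rw [if_neg]
          intro hiq
          exact hne (Prod.ext hiq.symm hq2)
        · intro hnotmem
          have : (i, j) ∉ c.support := fun hmem =>
            hnotmem (Finset.mem_filter.mpr ⟨hmem, rfl⟩)
          simp [Finsupp.notMem_support_iff.mp this]
      rw [hGzero, coeff_zero] at hco
      exact hco.symm
  refine Finsupp.ext fun q => ?_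
  rw [Finsupp.coe_zero, Pi.zero_apply]
  by_cases hq : q.2 < p
  · have := main q.2 hq q.1
    rwa [Prod.mk.eta] at this
  · have : q ∉ c.support := fun hmem => hq (hs q hmem)
    exact Finsupp.notMem_support_iff.mp this

end Aux

/-- In characteristic p > 0, with h ∈ Z(B)[x] having a non-zero-divisor leading
coefficient, {χ^i h(χ)^j ∂^j : i ≥ 0, 0 ≤ j < p} is a basis of D_h(B[z]) as a
left B-module: the operators belong to D_h(B[z]), they span it over B, and they
are left B-linearly independent. -/
theorem stmt10 (p : ℕ) (hp : 0 < p) [CharP F p]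
    (h : Polynomial B) (hcen : ∀ n, h.coeff n ∈ Set.center B)
    (hlead : NotZD h.leadingCoeff) :
    (∀ i j : ℕ, j < p →
        (chi F B) ^ i * (hChi F B h) ^ j * (dOp F B) ^ j ∈ Dh F B h) ∧
    (∀ T ∈ Dh F B h, ∃ c : ℕ × ℕ →₀ B, (∀ q ∈ c.support, q.2 < p) ∧
        T = c.sum fun q b =>
          LinearMap.mulLeft F (Polynomial.C b) *
            ((chi F B) ^ q.1 * (hChi F B h) ^ q.2 * (dOp F B) ^ q.2)) ∧
    (∀ c : ℕ × ℕ →₀ B, (∀ q ∈ c.support, q.2 < p) →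
        (c.sum fun q b =>
          LinearMap.mulLeft F (Polynomial.C b) *
            ((chi F B) ^ q.1 * (hChi F B h) ^ q.2 * (dOp F B) ^ q.2)) = 0 → c = 0) := by
  classical
  refine ⟨?_, ?_, ?_⟩
  · intro i j hj
    rw [Aux.hChi_eq, ← Aux.ml_pow, Aux.chi_eq, ← Aux.ml_pow, mul_assoc]
    exact mul_mem (Aux.ml_mem _) (Aux.T_mem hcen j)
  · intro T hT
    exact Aux.P_repr p hp (Aux.N_le_P hcen (Aux.Dh_le_N hcen hT))
  · intro c hcs hsum
    exact Aux.indep p hp hlead c hcs hsum
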